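/- For every x in the closed ball B̄(a,ρ): x is a minimizer of f over B̄(a,ρ) (i.e., x belongs to the median set 𝔐_μ) if and only if ‖H(x)‖ ≤ μ({x}). -/

import Mathlib

open MeasureTheory Metric
open scoped RealInnerProductSpace ENNReal Topology

lemma aux_lower {F : Type*} [NormedAddCommGroup F] [InnerProductSpace ℝ F]
    (c d : F) (hc : c ≠ 0) : ‖c‖ + ⟪d, ‖c‖⁻¹ • c⟫ ≤ ‖c + d‖ := by
  have hc' : (0:ℝ) < ‖c‖ := norm_pos_iff.mpr hc
  have h1 : ⟪c + d, c⟫ ≤ ‖c + d‖ * ‖c‖ := real_inner_le_norm _ _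
  have h2 : ⟪c + d, c⟫ = ‖c‖^2 + ⟪d, c⟫ := by
    rw [inner_add_left, real_inner_self_eq_norm_sq]
  rw [real_inner_smul_right]
  have h3 : ‖c‖ + ‖c‖⁻¹ * ⟪d, c⟫ = (‖c‖^2 + ⟪d, c⟫) / ‖c‖ := by
    field_simp
  rw [h3, div_le_iff₀ hc']
  rw [h2] at h1; linarith

lemma aux_upper {F : Type*} [NormedAddCommGroup F] [InnerProductSpace ℝ F]
    (c d : F) (hc : c ≠ 0) :
    ‖c + d‖ ≤ ‖c‖ + ⟪d, ‖c‖⁻¹ • c⟫ + ‖d‖^2 / (2 * ‖c‖) := by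
  have hc' : (0:ℝ) < ‖c‖ := norm_pos_iff.mpr hc
  have hsq : ‖c + d‖^2 = ‖c‖^2 + 2 * ⟪c, d⟫ + ‖d‖^2 := norm_add_sq_real c d
  rw [real_inner_smul_right]
  rw [real_inner_comm c d]
  have h3 : ‖c‖ + ‖c‖⁻¹ * ⟪c, d⟫ + ‖d‖^2 / (2*‖c‖) = (‖c‖^2 + ‖c + d‖^2) / (2*‖c‖) := by
    field_simp
    nlinarith [hsq]
  rw [h3, le_div_iff₀ (by positivity)]
  nlinarith [sq_nonneg (‖c‖ - ‖c + d‖)]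

set_option maxHeartbeats 1000000 in
/-- Euclidean case of Theorem 2.5, characterization of the median.
For `x ∈ B̄(a,ρ)`: `x` minimizes `f` over `B̄(a,ρ)` iff `‖H x‖ ≤ μ{x}`. -/
theorem stmt3 {n : ℕ} (hn : 1 ≤ n) (a : EuclideanSpace ℝ (Fin n)) (ρ : ℝ) (hρ : 0 < ρ)
    (μ : Measure (EuclideanSpace ℝ (Fin n))) [IsProbabilityMeasure μ]
    (hsupp : {x : EuclideanSpace ℝ (Fin n) | ∀ U ∈ nhds x, 0 < μ U} ⊆ ball a ρ)
    (f : EuclideanSpace ℝ (Fin n) → ℝ)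
    (hf : ∀ x, f x = ∫ p, ‖x - p‖ ∂μ)
    (H : EuclideanSpace ℝ (Fin n) → EuclideanSpace ℝ (Fin n))
    (hH : ∀ x, H x = ∫ p in ({x}ᶜ : Set (EuclideanSpace ℝ (Fin n))), ‖x - p‖⁻¹ • (x - p) ∂μ)
    (x : EuclideanSpace ℝ (Fin n)) (hx : x ∈ closedBall a ρ) :
    IsMinOn f (closedBall a ρ) x ↔ ‖H x‖ ≤ (μ {x}).toReal := by
  -- the complement of the ball is null
  have hμc : μ ((ball a ρ)ᶜ) = 0 := by
    apply measure_null_of_locally_null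
    intro y hy
    have hy' : ¬ (∀ U ∈ nhds y, 0 < μ U) := fun h => hy (hsupp h)
    push_neg at hy'
    obtain ⟨U, hU, hU0⟩ := hy'
    exact ⟨U, nhdsWithin_le_nhds hU, le_antisymm hU0 (zero_le)⟩
  have hae : ∀ᵐ p ∂μ, p ∈ ball a ρ := by
    rw [ae_iff]
    exact hμc
  -- basic integrability facts
  have int_norm : ∀ y : EuclideanSpace ℝ (Fin n), Integrable (fun p => ‖y - p‖) μ := by
    intro y
    refine (integrable_const (‖y - a‖ + ρ)).mono'
      ((continuous_const.sub continuous_id).norm.aestronglyMeasurable) ?_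
    filter_upwards [hae] with p hp
    rw [Real.norm_of_nonneg (norm_nonneg _)]
    have h1 : dist y p ≤ dist y a + dist a p := dist_triangle y a p
    have h2 : dist a p < ρ := by rwa [mem_ball, dist_comm] at hp
    rw [← dist_eq_norm, ← dist_eq_norm]
    linarith
  have meas_g : ∀ y : EuclideanSpace ℝ (Fin n), Measurable (fun p => ‖y - p‖⁻¹ • (y - p)) := by
    intro y
    exact ((measurable_const.sub measurable_id).norm.inv).smul
      (measurable_const.sub measurable_id)
  have g_norm : ∀ y p : EuclideanSpace ℝ (Fin n), ‖‖y - p‖⁻¹ • (y - p)‖ ≤ 1 := by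
    intro y p
    rcases eq_or_ne (y - p) 0 with h | h
    · simp [h]
    · rw [norm_smul, norm_inv, norm_norm, inv_mul_cancel₀ (norm_ne_zero_iff.mpr h)]
  have int_g : ∀ (y : EuclideanSpace ℝ (Fin n)) (s : Set (EuclideanSpace ℝ (Fin n))),
      IntegrableOn (fun p => ‖y - p‖⁻¹ • (y - p)) s μ := by
    intro y s
    refine (integrable_const (1:ℝ)).mono' ((meas_g y).aestronglyMeasurable) ?_
    exact ae_of_all _ fun p => g_norm y p
  have int_inner_g : ∀ (u y : EuclideanSpace ℝ (Fin n)) (s : Set (EuclideanSpace ℝ (Fin n))),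
      IntegrableOn (fun p => ⟪u, ‖y - p‖⁻¹ • (y - p)⟫) s μ :=
    fun u y s => (int_g y s).const_inner u
  have fdiff : ∀ y : EuclideanSpace ℝ (Fin n), f y - f x = ∫ p, (‖y - p‖ - ‖x - p‖) ∂μ := by
    intro y
    rw [hf, hf]
    exact (integral_sub (int_norm y) (int_norm x)).symm
  constructor
  · -- minimizer → small H

    intro hmin
    by_contra hgt
    push_neg at hgt
    have hμx0 : (0:ℝ) ≤ (μ {x}).toReal := ENNReal.toReal_nonneg
    -- choose a direction u
    obtain ⟨u, t₁, ht₁, hmem, hK⟩ :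
        ∃ (u : EuclideanSpace ℝ (Fin n)) (t₁ : ℝ), 0 < t₁ ∧
          (∀ t : ℝ, 0 < t → t ≤ t₁ → x + t • u ∈ closedBall a ρ) ∧
          ⟪u, H x⟫ + (μ {x}).toReal * ‖u‖ < 0 := by
      rcases lt_or_eq_of_le (mem_closedBall.mp hx) with hint | hbd
      · have hH0 : 0 < ‖H x‖ := lt_of_le_of_lt hμx0 hgt
        refine ⟨-H x, (ρ - dist x a) / ‖H x‖, div_pos (by linarith) hH0, ?_, ?_⟩
        · intro t ht0 ht1
          rw [mem_closedBall]
          have h1 : dist (x + t • (-H x)) x = t * ‖H x‖ := by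
            rw [dist_eq_norm]
            simp [norm_smul, abs_of_pos ht0]
          have h2 : t * ‖H x‖ ≤ ρ - dist x a := by
            rw [div_eq_mul_inv] at ht1
            have := mul_le_mul_of_nonneg_right ht1 hH0.le
            rwa [mul_assoc, inv_mul_cancel₀ hH0.ne', mul_one] at this
          calc dist (x + t • (-H x)) a ≤ dist (x + t • (-H x)) x + dist x a :=
                dist_triangle _ x a
            _ ≤ ρ := by rw [h1]; linarith
        · have hin : ⟪-H x, H x⟫ = -(‖H x‖^2) := by
            rw [inner_neg_left, real_inner_self_eq_norm_sq]
          rw [hin, norm_neg]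
          nlinarith
      · -- boundary case
        have hxball : x ∉ ball a ρ := by simp [mem_ball, hbd]
        have hμx : μ {x} = 0 :=
          measure_mono_null (by simpa [Set.singleton_subset_iff] using hxball) hμc
        have hres : μ.restrict ({x}ᶜ : Set (EuclideanSpace ℝ (Fin n))) = μ := by
          rw [Measure.restrict_congr_set (ae_eq_univ.mpr (by simpa using hμx)),
            Measure.restrict_univ]
        have hρ2 : ‖x - a‖ = ρ := by rw [← dist_eq_norm]; exact hbd
        have hpos : 0 < ⟪x - a, H x⟫ := by
          have heq : ⟪x - a, H x⟫
              = ∫ p, ⟪x - a, ‖x - p‖⁻¹ • (x - p)⟫ ∂μ := by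
            rw [hH, ← integral_inner (int_g x _)]
            rw [hres]
          rw [heq]
          have hint : Integrable (fun p => ⟪x - a, ‖x - p‖⁻¹ • (x - p)⟫) μ := by
            have := int_inner_g (x - a) x Set.univ
            rwa [IntegrableOn, Measure.restrict_univ] at this
          have hptpos : ∀ p ∈ ball a ρ, 0 < ⟪x - a, ‖x - p‖⁻¹ • (x - p)⟫ := by
            intro p hp
            have hpx : p ≠ x := fun h => hxball (h ▸ hp)
            have hxp : x - p ≠ 0 := sub_ne_zero.mpr (Ne.symm hpx)
            have hsum : x - p = (x - a) + (a - p) := by abel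
            have hin2 : ⟪x - a, x - p⟫ = ‖x - a‖^2 + ⟪x - a, a - p⟫ := by
              rw [hsum, inner_add_right, real_inner_self_eq_norm_sq]
            have hcs : |⟪x - a, a - p⟫| ≤ ‖x - a‖ * ‖a - p‖ :=
              abs_real_inner_le_norm _ _
            have hap : ‖a - p‖ < ρ := by
              rw [← dist_eq_norm, dist_comm]
              exact mem_ball.mp hp
            have h6 : 0 < ⟪x - a, x - p⟫ := by
              rw [hin2, hρ2]
              have := abs_le.mp hcs
              nlinarith [this.1]
            rw [real_inner_smul_right]
            exact mul_pos (inv_pos.mpr (norm_pos_iff.mpr hxp)) h6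
          have hnonneg : 0 ≤ᵐ[μ] fun p => ⟪x - a, ‖x - p‖⁻¹ • (x - p)⟫ := by
            filter_upwards [hae] with p hp
            exact (hptpos p hp).le
          rw [integral_pos_iff_support_of_nonneg_ae hnonneg hint]
          refine lt_of_lt_of_le ?_
            (measure_mono fun p hp => Function.mem_support.mpr (ne_of_gt (hptpos p hp)))
          rw [pos_iff_ne_zero]
          intro h0
          have huniv : μ Set.univ ≤ μ (ball a ρ) + μ ((ball a ρ)ᶜ) := by
            rw [← Set.union_compl_self (ball a ρ)]
            exact measure_union_le _ _
          rw [measure_univ, h0, hμc] at huniv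
          simp at huniv
        refine ⟨a - x, 1, one_pos, ?_, ?_⟩
        · intro t ht0 ht1
          have hrepr : x + t • (a - x) - a = (1 - t) • (x - a) := by module
          rw [mem_closedBall, dist_eq_norm, hrepr, norm_smul, hρ2,
            Real.norm_of_nonneg (by linarith)]
          nlinarith
        · have hneg : ⟪a - x, H x⟫ = -⟪x - a, H x⟫ := by
            have : a - x = -(x - a) := by abel
            rw [this, inner_neg_left]
          rw [hneg, hμx]
          simp only [ENNReal.toReal_zero, zero_mul, add_zero]
          linarith
    -- abbreviations
    set M := ‖u‖ with hM
    have hM0 : (0:ℝ) ≤ M := norm_nonneg u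
    set δ := -(⟪u, H x⟫ + (μ {x}).toReal * M) with hδdef
    have hδ : 0 < δ := by rw [hδdef]; linarith
    -- a small annulus around x
    obtain ⟨r, hr0, hann⟩ : ∃ r : ℝ, 0 < r ∧
        (μ (closedBall x r \ {x})).toReal ≤ δ / (8 * (M + 1)) := by
      set s : ℕ → Set (EuclideanSpace ℝ (Fin n)) :=
        fun k => closedBall x (1/(k+1)) \ {x} with hs
      have hT : Filter.Tendsto (fun k => μ (s k)) Filter.atTop (𝓝 (μ (⋂ k, s k))) := by
        apply tendsto_measure_iInter_atTop
        · intro k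
          exact ((measurableSet_closedBall).diff
            (MeasurableSet.singleton x)).nullMeasurableSet
        · intro i j hij
          apply Set.diff_subset_diff_left
          apply closedBall_subset_closedBall
          have h1 : (0:ℝ) < (i:ℝ) + 1 := by positivity
          have h2 : (i:ℝ) + 1 ≤ (j:ℝ) + 1 := by
            have := Nat.cast_le (α := ℝ).mpr hij
            linarith
          exact one_div_le_one_div_of_le h1 h2
        · exact ⟨0, measure_ne_top μ _⟩
      have hempty : (⋂ k, s k) = (∅ : Set (EuclideanSpace ℝ (Fin n))) := by
        ext p
        simp only [Set.mem_iInter, Set.mem_empty_iff_false, iff_false]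
        intro hp
        have hpx : p ≠ x := by
          have := (hp 0).2
          simpa using this
        have hd : 0 < dist p x := dist_pos.mpr hpx
        obtain ⟨k, hk⟩ := exists_nat_one_div_lt hd
        have := (hp k).1
        rw [mem_closedBall] at this
        linarith
      rw [hempty, measure_empty] at hT
      have hε : (0:ℝ≥0∞) < ENNReal.ofReal (δ / (8*(M+1))) := by
        rw [ENNReal.ofReal_pos]; positivity
      obtain ⟨k, hk⟩ := (hT.eventually (gt_mem_nhds hε)).exists
      refine ⟨1/(k+1), by positivity, ?_⟩
      exact ENNReal.toReal_le_of_le_ofReal (by positivity) hk.le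
    set ε := (μ (closedBall x r \ {x})).toReal with hεdef
    have hε0 : 0 ≤ ε := ENNReal.toReal_nonneg
    -- choice of t
    set t := min t₁ (min (r^2) ((δ / (2*(M^2+1)))^2)) with htdef
    have ht0 : 0 < t := lt_min ht₁ (lt_min (by positivity) (by positivity))
    set rt := Real.sqrt t with hrtdef
    have hrt0 : 0 < rt := Real.sqrt_pos.mpr ht0
    have hrtr : rt ≤ r := by
      rw [hrtdef, show r = Real.sqrt (r^2) from (Real.sqrt_sq hr0.le).symm]
      exact Real.sqrt_le_sqrt (le_trans (min_le_right _ _) (min_le_left _ _))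
    have hrtδ : rt ≤ δ / (2*(M^2+1)) := by
      rw [hrtdef, show δ/(2*(M^2+1)) = Real.sqrt ((δ/(2*(M^2+1)))^2) from
        (Real.sqrt_sq (by positivity)).symm]
      exact Real.sqrt_le_sqrt (le_trans (min_le_right _ _) (min_le_right _ _))
    have hrtt : rt * rt = t := Real.mul_self_sqrt ht0.le
    set y := x + t • u with hydef
    have hymem : y ∈ closedBall a ρ := hmem t ht0 (min_le_left _ _)
    have hfy : f x ≤ f y := isMinOn_iff.mp hmin y hymem
    set C := closedBall x rt with hCdef
    have hCm : MeasurableSet C := measurableSet_closedBall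
    have hnorm_tu : ‖t • u‖ = t * M := by
      rw [norm_smul, Real.norm_of_nonneg ht0.le, hM]
    have intd : Integrable (fun p => ‖y - p‖ - ‖x - p‖) μ := (int_norm y).sub (int_norm x)
    -- bound on C
    have hCbound : ∫ p in C, (‖y - p‖ - ‖x - p‖) ∂μ ≤ (μ C).toReal * (t * M) := by
      have hpt : ∀ p ∈ C, ‖y - p‖ - ‖x - p‖ ≤ t * M := by
        intro p _
        have h1 := norm_sub_norm_le (y - p) (x - p)
        have he : y - p - (x - p) = t • u := by rw [hydef]; abel
        rw [he, hnorm_tu] at h1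
        exact h1
      calc ∫ p in C, (‖y - p‖ - ‖x - p‖) ∂μ ≤ ∫ _ in C, (t*M) ∂μ :=
            setIntegral_mono_on intd.integrableOn
              (integrableOn_const (measure_lt_top μ C).ne) hCm hpt
        _ = (μ C).toReal * (t*M) := by rw [setIntegral_const]; simp [smul_eq_mul, Measure.real]
    -- measure of C
    have hCsplit : (μ C).toReal ≤ (μ {x}).toReal + ε := by
      have h1 : μ C ≤ μ ({x} : Set (EuclideanSpace ℝ (Fin n)))
          + μ (closedBall x r \ {x}) := by
        refine le_trans (measure_mono ?_) (measure_union_le _ _)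
        intro p hp
        by_cases hpx : p = x
        · exact Or.inl (by simp [hpx])
        · exact Or.inr ⟨closedBall_subset_closedBall hrtr hp, hpx⟩
      calc (μ C).toReal ≤ (μ ({x} : Set (EuclideanSpace ℝ (Fin n)))
            + μ (closedBall x r \ {x})).toReal :=
            ENNReal.toReal_mono (by finiteness) h1
        _ = (μ {x}).toReal + ε := ENNReal.toReal_add (measure_ne_top μ _) (measure_ne_top μ _)
    -- bound on Cᶜ
    set gI := ∫ p in (Cᶜ : Set (EuclideanSpace ℝ (Fin n))), ‖x - p‖⁻¹ • (x - p) ∂μ with hgIdef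
    have hBbound : ∫ p in (Cᶜ : Set (EuclideanSpace ℝ (Fin n))), (‖y - p‖ - ‖x - p‖) ∂μ
        ≤ t * ⟪u, gI⟫ + t * (rt * M^2 / 2) := by
      have hpt : ∀ p ∈ (Cᶜ : Set (EuclideanSpace ℝ (Fin n))),
          ‖y - p‖ - ‖x - p‖ ≤ t * ⟪u, ‖x - p‖⁻¹ • (x - p)⟫ + t * (rt * M^2 / 2) := by
        intro p hp
        have hdist : rt < dist p x := by
          by_contra hc
          exact hp (mem_closedBall.mpr (not_lt.mp hc))
        have hge : rt ≤ ‖x - p‖ := by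
          rw [← dist_eq_norm, dist_comm]
          exact hdist.le
        have hxp : x - p ≠ 0 := by
          intro h0
          rw [h0, norm_zero] at hge
          linarith
        have hub := aux_upper (x - p) (t • u) hxp
        have he : x - p + t • u = y - p := by rw [hydef]; abel
        rw [he, hnorm_tu, real_inner_smul_left] at hub
        have h2 : (t*M)^2 / (2 * ‖x - p‖) ≤ t * (rt * M^2 / 2) := by
          have hxp0 : (0:ℝ) < ‖x - p‖ := lt_of_lt_of_le hrt0 hge
          have h3 : (t*M)^2 / (2 * ‖x - p‖) ≤ (t*M)^2 / (2 * rt) :=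
            div_le_div_of_nonneg_left (by positivity) (by positivity) (by linarith)
          have h4 : (t*M)^2 / (2 * rt) = t * (rt * M^2 / 2) := by
            have : t = rt * rt := hrtt.symm
            rw [this]
            field_simp
          linarith
        have h5 : t * ⟪u, ‖x - p‖⁻¹ • (x - p)⟫
            = ⟪u, ‖x - p‖⁻¹ • (x - p)⟫ * t := by ring
        nlinarith [hub]
      have hint1 : IntegrableOn
          (fun p => t * ⟪u, ‖x - p‖⁻¹ • (x - p)⟫ + t * (rt * M^2 / 2))
          (Cᶜ : Set (EuclideanSpace ℝ (Fin n))) μ :=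
        (((int_inner_g u x _).const_mul t).add (integrableOn_const
          (measure_lt_top μ _).ne))
      calc ∫ p in (Cᶜ : Set (EuclideanSpace ℝ (Fin n))), (‖y - p‖ - ‖x - p‖) ∂μ
          ≤ ∫ p in (Cᶜ : Set (EuclideanSpace ℝ (Fin n))),
            (t * ⟪u, ‖x - p‖⁻¹ • (x - p)⟫ + t * (rt * M^2 / 2)) ∂μ :=
            setIntegral_mono_on intd.integrableOn hint1 hCm.compl hpt
        _ = t * (∫ p in (Cᶜ : Set (EuclideanSpace ℝ (Fin n))),
              ⟪u, ‖x - p‖⁻¹ • (x - p)⟫ ∂μ)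
            + (μ (Cᶜ : Set (EuclideanSpace ℝ (Fin n)))).toReal * (t * (rt * M^2 / 2)) := by
            rw [integral_add ((int_inner_g u x _).const_mul t)
              (integrableOn_const (measure_lt_top μ _).ne),
              integral_const_mul, setIntegral_const]
            simp [smul_eq_mul, Measure.real]
        _ ≤ t * ⟪u, gI⟫ + t * (rt * M^2 / 2) := by
            rw [integral_inner (int_g x _)]
            have hle1 : (μ (Cᶜ : Set (EuclideanSpace ℝ (Fin n)))).toReal ≤ 1 := by
              rw [show (1:ℝ) = (μ Set.univ).toReal by simp]
              exact ENNReal.toReal_mono (by finiteness) (measure_mono (Set.subset_univ _))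
            have hc0 : 0 ≤ t * (rt * M^2 / 2) := by positivity
            nlinarith
    -- relate gI to H x
    have hIC : ⟪u, gI⟫ ≤ ⟪u, H x⟫ + M * ε := by
      have hun : (C \ {x}) ∪ (Cᶜ : Set (EuclideanSpace ℝ (Fin n)))
          = ({x}ᶜ : Set (EuclideanSpace ℝ (Fin n))) := by
        ext p
        by_cases hp : p ∈ C <;> by_cases hpx : p = x
        · subst hpx
          simp [hp]
        · simp [hp, hpx]
        · subst hpx
          exact absurd (mem_closedBall_self hrt0.le) hp
        · simp [hp, hpx]
      have hdisj : Disjoint (C \ {x}) (Cᶜ : Set (EuclideanSpace ℝ (Fin n))) :=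
        Set.disjoint_of_subset_left Set.diff_subset disjoint_compl_right
      have hsplit : H x = (∫ p in (C \ {x}), ‖x - p‖⁻¹ • (x - p) ∂μ) + gI := by
        rw [hH, ← hun, setIntegral_union hdisj hCm.compl (int_g x _) (int_g x _)]
      have hnormIC : ‖∫ p in (C \ {x}), ‖x - p‖⁻¹ • (x - p) ∂μ‖ ≤ ε := by
        have h1 : ‖∫ p in (C \ {x}), ‖x - p‖⁻¹ • (x - p) ∂μ‖
            ≤ 1 * (μ (C \ {x})).toReal :=
          norm_setIntegral_le_of_norm_le_const (measure_lt_top μ _)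
            (fun p _ => g_norm x p)
        have h2 : (μ (C \ {x})).toReal ≤ ε := by
          apply ENNReal.toReal_mono (measure_ne_top μ _)
          exact measure_mono (Set.diff_subset_diff_left
            (closedBall_subset_closedBall hrtr))
        linarith
      have h3 : ⟪u, H x⟫ = ⟪u, ∫ p in (C \ {x}), ‖x - p‖⁻¹ • (x - p) ∂μ⟫ + ⟪u, gI⟫ := by
        rw [hsplit, inner_add_right]
      have h4 : |⟪u, ∫ p in (C \ {x}), ‖x - p‖⁻¹ • (x - p) ∂μ⟫| ≤ M * ε := by
        calc |⟪u, ∫ p in (C \ {x}), ‖x - p‖⁻¹ • (x - p) ∂μ⟫|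
            ≤ M * ‖∫ p in (C \ {x}), ‖x - p‖⁻¹ • (x - p) ∂μ‖ :=
              abs_real_inner_le_norm _ _
          _ ≤ M * ε := by
              apply mul_le_mul_of_nonneg_left hnormIC hM0
      have := abs_le.mp h4
      linarith [this.1]
    -- final contradiction
    have hfinal : f y - f x < 0 := by
      rw [fdiff y, ← integral_add_compl hCm intd]
      have hεb : ε ≤ δ / (8 * (M + 1)) := hann
      have hrtb : rt * M^2 / 2 ≤ δ / 4 := by
        have h1 : rt * M^2 ≤ (δ / (2*(M^2+1))) * M^2 :=
          mul_le_mul_of_nonneg_right hrtδ (by positivity)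
        have h2 : (δ / (2*(M^2+1))) * M^2 ≤ δ / 2 := by
          rw [div_mul_eq_mul_div, div_le_div_iff₀ (by positivity) (by norm_num)]
          nlinarith
        linarith
      have hMε : 2 * (M * ε) ≤ δ / 4 := by
        have h1 : M * ε ≤ M * (δ / (8 * (M + 1))) :=
          mul_le_mul_of_nonneg_left hεb hM0
        have h2 : M * (δ / (8 * (M + 1))) ≤ δ / 8 := by
          rw [mul_div_assoc', div_le_div_iff₀ (by positivity) (by norm_num)]
          nlinarith
        linarith
      have hKe : ⟪u, H x⟫ + (μ {x}).toReal * M = -δ := by rw [hδdef]; ring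
      have e1 : (μ C).toReal * (t * M) ≤ ((μ {x}).toReal + ε) * (t * M) :=
        mul_le_mul_of_nonneg_right hCsplit (by positivity)
      have e2 : t * ⟪u, gI⟫ ≤ t * (⟪u, H x⟫ + M * ε) :=
        mul_le_mul_of_nonneg_left hIC ht0.le
      have e3 : t * (rt * M^2 / 2) ≤ t * (δ/4) :=
        mul_le_mul_of_nonneg_left hrtb ht0.le
      have e5 : t * (2 * (M * ε)) ≤ t * (δ/4) :=
        mul_le_mul_of_nonneg_left hMε ht0.le
      nlinarith [hCbound, hBbound, ht0, hδ, mul_pos ht0 hδ]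
    linarith

  · -- small H → minimizer
    intro hle
    rw [isMinOn_iff]
    intro y hy
    have intd : Integrable (fun p => ‖y - p‖ - ‖x - p‖) μ := (int_norm y).sub (int_norm x)
    have key : 0 ≤ f y - f x := by
      rw [fdiff y, ← integral_add_compl (MeasurableSet.singleton x) intd]
      have e1 : ∫ p in ({x} : Set (EuclideanSpace ℝ (Fin n))), (‖y - p‖ - ‖x - p‖) ∂μ
          = (μ {x}).toReal * ‖y - x‖ := by
        rw [integral_singleton]
        simp [smul_eq_mul, Measure.real]
      have e2 : ⟪y - x, H x⟫ ≤ ∫ p in ({x}ᶜ : Set (EuclideanSpace ℝ (Fin n))), (‖y - p‖ - ‖x - p‖) ∂μ := by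
        have hmono : ∫ p in ({x}ᶜ : Set (EuclideanSpace ℝ (Fin n))), ⟪y - x, ‖x - p‖⁻¹ • (x - p)⟫ ∂μ
            ≤ ∫ p in ({x}ᶜ : Set (EuclideanSpace ℝ (Fin n))), (‖y - p‖ - ‖x - p‖) ∂μ := by
          refine setIntegral_mono_on (int_inner_g (y-x) x _)
            (intd.integrableOn)
            (MeasurableSet.singleton x).compl ?_
          intro p hp
          have hp' : x - p ≠ 0 := sub_ne_zero.mpr (Ne.symm hp)
          have := aux_lower (x - p) (y - x) hp'
          have hyp : x - p + (y - x) = y - p := by abel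
          rw [hyp] at this
          linarith
        have heq : ∫ p in ({x}ᶜ : Set (EuclideanSpace ℝ (Fin n))), ⟪y - x, ‖x - p‖⁻¹ • (x - p)⟫ ∂μ
            = ⟪y - x, H x⟫ := by
          rw [hH, integral_inner (int_g x _)]
        rw [← heq]; exact hmono
      have hip : -(‖y - x‖ * ‖H x‖) ≤ ⟪y - x, H x⟫ := by
        have := abs_real_inner_le_norm (y - x) (H x)
        have := abs_le.mp this
        linarith [this.1]
      have hnn : 0 ≤ ‖y - x‖ := norm_nonneg _
      nlinarith [mul_le_mul_of_nonneg_left hle hnn]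
    linarith
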